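/- Let f be a probability density on ℝ² supported on the unit disk, let s ∈ ℝ², and let g = T_s f be its translate, g(x) = f(x − s) (so g is also a probability density, supported in a disk of radius 1 about s). Then for every p ≥ 1, the sliced p-Wasserstein distance satisfies d_{SWp}(f, g) = (Γ((p+1)/2) / (√π · Γ(p/2 + 1)))^{1/p} · ‖s‖, i.e. d_{SWp}^p(f, g) = (Γ((p+1)/2)/(√π Γ(p/2+1))) ‖s‖^p. -/

import Mathlib

open MeasureTheory Real Set


-- rotation as a linear map on ℝ × ℝ
noncomputable def rotLM (θ : ℝ) : (ℝ × ℝ) →ₗ[ℝ] (ℝ × ℝ) where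
  toFun x := (x.1 * Real.cos θ - x.2 * Real.sin θ, x.1 * Real.sin θ + x.2 * Real.cos θ)
  map_add' x y := by
    simp only [Prod.fst_add, Prod.snd_add, Prod.mk_add_mk, Prod.mk.injEq]
    constructor <;> ring
  map_smul' c x := by
    simp only [Prod.smul_fst, Prod.smul_snd, smul_eq_mul, Prod.smul_mk, RingHom.id_apply,
      Prod.mk.injEq]
    constructor <;> ring

lemma rotLM_apply (θ : ℝ) (x : ℝ × ℝ) :
    rotLM θ x = (x.1 * Real.cos θ - x.2 * Real.sin θ, x.1 * Real.sin θ + x.2 * Real.cos θ) := rfl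

lemma rotLM_det (θ : ℝ) : LinearMap.det (rotLM θ) = 1 := by
  rw [← LinearMap.det_toMatrix (Module.Basis.finTwoProd ℝ), Matrix.det_fin_two]
  simp only [LinearMap.toMatrix_apply, Module.Basis.finTwoProd_zero, Module.Basis.finTwoProd_one,
    Module.Basis.coe_finTwoProd_repr, rotLM, LinearMap.coe_mk, AddHom.coe_mk]
  simp only [Matrix.cons_val_zero, Matrix.cons_val_one, Matrix.head_cons, one_mul, zero_mul,
    mul_one, mul_zero, sub_zero, zero_sub, add_zero, zero_add]
  linear_combination Real.sin_sq_add_cos_sq θ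

noncomputable def rotLE (θ : ℝ) : (ℝ × ℝ) ≃ₗ[ℝ] (ℝ × ℝ) :=
  LinearEquiv.ofLinear (rotLM θ) (rotLM (-θ))
    (by
      apply LinearMap.ext; intro x
      simp only [LinearMap.comp_apply, rotLM_apply, Real.cos_neg, Real.sin_neg,
        LinearMap.id_apply]
      have h := Real.sin_sq_add_cos_sq θ
      ext
      · linear_combination x.1 * h
      · linear_combination x.2 * h)
    (by
      apply LinearMap.ext; intro x
      simp only [LinearMap.comp_apply, rotLM_apply, Real.cos_neg, Real.sin_neg,
        LinearMap.id_apply]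
      have h := Real.sin_sq_add_cos_sq θ
      ext
      · linear_combination x.1 * h
      · linear_combination x.2 * h)

lemma rot_measurePreserving (θ : ℝ) :
    MeasurePreserving (fun x : ℝ × ℝ =>
      (x.1 * Real.cos θ - x.2 * Real.sin θ, x.1 * Real.sin θ + x.2 * Real.cos θ))
      volume volume := by
  have hdet : LinearMap.det (rotLM θ) ≠ 0 := by rw [rotLM_det]; norm_num
  have hcont : Continuous (rotLM θ) := (rotLM θ).continuous_of_finiteDimensional
  refine ⟨hcont.measurable, ?_⟩
  have := Measure.map_linearMap_addHaar_eq_smul_addHaar (volume : Measure (ℝ × ℝ)) hdet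
  rw [rotLM_det] at this
  simp at this; exact this

lemma rot_measurableEmbedding (θ : ℝ) :
    MeasurableEmbedding (fun x : ℝ × ℝ =>
      (x.1 * Real.cos θ - x.2 * Real.sin θ, x.1 * Real.sin θ + x.2 * Real.cos θ)) := by
  have : MeasurableEmbedding ((rotLE θ).toContinuousLinearEquiv.toHomeomorph.toMeasurableEquiv) :=
    MeasurableEquiv.measurableEmbedding _
  exact this

lemma gamma_moment (p : ℝ) (hp : -1 < p) :
    ∫ x in Ioi (0:ℝ), x ^ p * Real.exp (-x ^ 2) = (1/2) * Real.Gamma ((p+1)/2) := by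
  have h := integral_rpow_mul_exp_neg_rpow (p := 2) (q := p) (by norm_num) hp
  rw [← h]
  refine setIntegral_congr_fun measurableSet_Ioi (fun x hx => ?_)
  rw [show ((2:ℝ)) = ((2:ℕ):ℝ) by norm_num, Real.rpow_natCast]

lemma integral_abs_cos_rpow (p : ℝ) (hp : 0 < p) :
    ∫ θ in Ioo (-π) π, |Real.cos θ| ^ p
      = 2 * Real.sqrt π * Real.Gamma ((p+1)/2) / Real.Gamma (p/2+1) := by
  have hΓpos : 0 < Real.Gamma (p/2+1) := Real.Gamma_pos_of_pos (by linarith)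
  have hLHS : ∫ x : ℝ × ℝ, |x.1| ^ p * Real.exp (-(x.1 ^ 2 + x.2 ^ 2))
      = Real.Gamma ((p+1)/2) * Real.sqrt π := by
    have : (fun x : ℝ × ℝ => |x.1| ^ p * Real.exp (-(x.1 ^ 2 + x.2 ^ 2)))
        = fun x : ℝ × ℝ => (|x.1| ^ p * Real.exp (-x.1 ^ 2)) * Real.exp (-x.2 ^ 2) := by
      funext x
      rw [neg_add, Real.exp_add]; ring
    rw [this, Measure.volume_eq_prod,
      integral_prod_mul (f := fun a : ℝ => |a| ^ p * Real.exp (-a ^ 2))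
        (g := fun b : ℝ => Real.exp (-b ^ 2))]
    have h1 : ∫ x : ℝ, |x| ^ p * Real.exp (-x ^ 2) = Real.Gamma ((p+1)/2) := by
      have heq : (fun x : ℝ => |x| ^ p * Real.exp (-x ^ 2))
          = fun x : ℝ => |x| ^ p * Real.exp (-|x| ^ 2) := by
        funext x; rw [sq_abs]
      rw [heq, integral_comp_abs (f := fun x : ℝ => x ^ p * Real.exp (-x ^ 2)),
        gamma_moment p (by linarith)]
      ring
    have h2 : ∫ y : ℝ, Real.exp (-y ^ 2) = Real.sqrt π := by
      have := integral_gaussian 1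
      simpa using this
    rw [h1, h2]
  have hRHS : ∫ x : ℝ × ℝ, |x.1| ^ p * Real.exp (-(x.1 ^ 2 + x.2 ^ 2))
      = ((1/2) * Real.Gamma (p/2+1)) * ∫ θ in Ioo (-π) π, |Real.cos θ| ^ p := by
    rw [← integral_comp_polarCoord_symm]
    have htarget : polarCoord.target = Ioi (0:ℝ) ×ˢ Ioo (-π) π := rfl
    rw [htarget]
    have hint : ∀ q ∈ Ioi (0:ℝ) ×ˢ Ioo (-π) π,
        q.1 • (|((polarCoord.symm q).1)| ^ p
          * Real.exp (-(((polarCoord.symm q).1) ^ 2 + ((polarCoord.symm q).2) ^ 2)))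
        = (q.1 ^ (p+1) * Real.exp (-q.1 ^ 2)) * |Real.cos q.2| ^ p := by
      rintro ⟨r, θ⟩ ⟨hr, hθ⟩
      have hr0 : (0:ℝ) < r := hr
      have hsymm : polarCoord.symm (r, θ) = (r * Real.cos θ, r * Real.sin θ) :=
        polarCoord_symm_apply (r, θ)
      rw [hsymm]
      have habs : |r * Real.cos θ| = r * |Real.cos θ| := by
        rw [abs_mul, abs_of_pos hr0]
      have hsq : (r * Real.cos θ) ^ 2 + (r * Real.sin θ) ^ 2 = r ^ 2 := by
        have h := Real.sin_sq_add_cos_sq θ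
        linear_combination r ^ 2 * h
      rw [habs, hsq, Real.mul_rpow hr0.le (abs_nonneg _),
        Real.rpow_add_one hr0.ne']
      simp only [smul_eq_mul]
      ring
    rw [setIntegral_congr_fun (measurableSet_Ioi.prod measurableSet_Ioo) hint]
    rw [Measure.volume_eq_prod,
      setIntegral_prod_mul (f := fun r : ℝ => r ^ (p+1) * Real.exp (-r ^ 2))
        (g := fun θ : ℝ => |Real.cos θ| ^ p)]
    have h3 : ∫ r in Ioi (0:ℝ), r ^ (p+1) * Real.exp (-r ^ 2) = (1/2) * Real.Gamma (p/2+1) := by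
      rw [gamma_moment (p+1) (by linarith)]
      norm_num
      ring_nf
    rw [h3]
  rw [hRHS] at hLHS
  field_simp at hLHS ⊢
  linarith [hLHS]

/-- CDF of a density `μ` on `ℝ`: `F_μ(t) = ∫_{-∞}^t μ`. -/
noncomputable def cdfOf (μ : ℝ → ℝ) (t : ℝ) : ℝ := ∫ x in Set.Iic t, μ x

/-- Quantile function `Q_μ(z) = inf {t : F_μ(t) ≥ z}`. -/
noncomputable def quantileOf (μ : ℝ → ℝ) (z : ℝ) : ℝ := sInf {t : ℝ | z ≤ cdfOf μ t}


lemma cdf_shift (μ : ℝ → ℝ) (c t : ℝ) : cdfOf (fun r => μ (r - c)) t = cdfOf μ (t - c) := by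
  unfold cdfOf
  calc ∫ x in Iic t, μ (x - c)
      = ∫ x, (Iic t).indicator (fun y => μ (y - c)) x := (integral_indicator measurableSet_Iic).symm
    _ = ∫ x, (Iic t).indicator (fun y => μ (y - c)) (x + c) :=
        (integral_add_right_eq_self _ c).symm
    _ = ∫ x, (Iic (t - c)).indicator μ x := by
        congr 1; ext x
        simp only [indicator_apply, mem_Iic, add_sub_cancel_right]
        exact if_congr ⟨fun h => by linarith, fun h => by linarith⟩ rfl rfl
    _ = ∫ x in Iic (t - c), μ x := integral_indicator measurableSet_Iic

lemma quantile_shift (μ : ℝ → ℝ) (c z : ℝ)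
    (hne : {t : ℝ | z ≤ cdfOf μ t}.Nonempty) (hbdd : BddBelow {t : ℝ | z ≤ cdfOf μ t}) :
    quantileOf (fun r => μ (r - c)) z = quantileOf μ z + c := by
  unfold quantileOf
  have hset : {t : ℝ | z ≤ cdfOf (fun r => μ (r - c)) t}
      = (OrderIso.addRight c) '' {t | z ≤ cdfOf μ t} := by
    ext t
    simp only [mem_setOf_eq, mem_image, cdf_shift, OrderIso.addRight_apply]
    constructor
    · intro h; exact ⟨t - c, h, by ring⟩
    · rintro ⟨a, ha, rfl⟩; simpa using ha
  rw [hset, ← OrderIso.map_csInf' _ hne hbdd, OrderIso.addRight_apply]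

/-- `d_{Wp}^p(μ, ν) = ∫₀¹ |Q_μ(z) − Q_ν(z)|^p dz`. -/
noncomputable def wassersteinPow (p : ℝ) (μ ν : ℝ → ℝ) : ℝ :=
  ∫ z in Set.Ioo (0:ℝ) 1, |quantileOf μ z - quantileOf ν z| ^ p

/-- 1-D `p`-Wasserstein distance between densities. -/
noncomputable def wasserstein (p : ℝ) (μ ν : ℝ → ℝ) : ℝ :=
  (wassersteinPow p μ ν) ^ (1 / p)

/-- Line projection of an image `f : ℝ² → ℝ` at angle `θ`:
`P_θ f(s) = ∫ f(s(cos θ, sin θ) + t(−sin θ, cos θ)) dt`. -/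
noncomputable def lineProj (f : ℝ × ℝ → ℝ) (θ : ℝ) (s : ℝ) : ℝ :=
  ∫ t : ℝ, f (s * Real.cos θ - t * Real.sin θ, s * Real.sin θ + t * Real.cos θ)


section LineProjFacts

variable {f : ℝ × ℝ → ℝ}

lemma rot_integrable (hfi : Integrable f) (θ : ℝ) :
    Integrable (fun x : ℝ × ℝ =>
      f (x.1 * Real.cos θ - x.2 * Real.sin θ, x.1 * Real.sin θ + x.2 * Real.cos θ)) :=
  ((rot_measurePreserving θ).integrable_comp_emb (rot_measurableEmbedding θ) (g := f)).mpr hfi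

lemma rot_integrable_prod (hfi : Integrable f) (θ : ℝ) :
    Integrable (fun x : ℝ × ℝ =>
      f (x.1 * Real.cos θ - x.2 * Real.sin θ, x.1 * Real.sin θ + x.2 * Real.cos θ))
      ((volume : Measure ℝ).prod volume) := by
  rw [← Measure.volume_eq_prod]; exact rot_integrable hfi θ

lemma lineProj_integrable (hfi : Integrable f) (θ : ℝ) : Integrable (lineProj f θ) :=
  (rot_integrable_prod hfi θ).integral_prod_left

lemma lineProj_total (hfi : Integrable f) (hfint : ∫ x : ℝ × ℝ, f x = 1) (θ : ℝ) :
    ∫ r : ℝ, lineProj f θ r = 1 := by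
  have h1 : ∫ x : ℝ × ℝ, f (x.1 * Real.cos θ - x.2 * Real.sin θ,
      x.1 * Real.sin θ + x.2 * Real.cos θ) = 1 := by
    rw [(rot_measurePreserving θ).integral_comp (rot_measurableEmbedding θ) f]
    exact hfint
  have h2 := integral_prod _ (rot_integrable_prod hfi θ)
  unfold lineProj
  rw [← h2, ← Measure.volume_eq_prod]
  exact h1

lemma lineProj_zero (hfsupp : ∀ x : ℝ × ℝ, 1 < x.1 ^ 2 + x.2 ^ 2 → f x = 0)
    (θ r : ℝ) (hr : 1 < r ^ 2) : lineProj f θ r = 0 := by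
  unfold lineProj
  have : ∀ t : ℝ, f (r * Real.cos θ - t * Real.sin θ, r * Real.sin θ + t * Real.cos θ) = 0 := by
    intro t
    apply hfsupp
    have h := Real.sin_sq_add_cos_sq θ
    have key : (r * Real.cos θ - t * Real.sin θ) ^ 2 + (r * Real.sin θ + t * Real.cos θ) ^ 2
        = r ^ 2 + t ^ 2 := by linear_combination (r ^ 2 + t ^ 2) * h
    rw [key]
    nlinarith [sq_nonneg t]
  simp [this]

end LineProjFacts

/-- `d_{SWp}^p(f, g) = (1/2π) ∫₀^{2π} d_{Wp}^p(P_θ f, P_θ g) dθ`. -/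
noncomputable def slicedWassersteinPow (p : ℝ) (f g : ℝ × ℝ → ℝ) : ℝ :=
  (1 / (2 * Real.pi)) * ∫ θ in Set.Ioo (0:ℝ) (2 * Real.pi),
    wassersteinPow p (lineProj f θ) (lineProj g θ)

/-- Sliced `p`-Wasserstein distance between two images. -/
noncomputable def slicedWasserstein (p : ℝ) (f g : ℝ × ℝ → ℝ) : ℝ :=
  (slicedWassersteinPow p f g) ^ (1 / p)

/-- Rotation of an image by angle `α`: `(R_α g)(x) = g(R_α⁻¹ x)`. -/
noncomputable def rotImage (α : ℝ) (g : ℝ × ℝ → ℝ) : ℝ × ℝ → ℝ :=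
  fun x => g (x.1 * Real.cos α + x.2 * Real.sin α, -x.1 * Real.sin α + x.2 * Real.cos α)

/-- Translation equivariance of the sliced `p`-Wasserstein distance:
if `g = T_s f` is the translate of a probability density `f` supported on the unit disk, then
`d_{SWp}(f, g) = (Γ((p+1)/2)/(√π Γ(p/2+1)))^{1/p} ‖s‖`, equivalently
`d_{SWp}^p(f, g) = (Γ((p+1)/2)/(√π Γ(p/2+1))) ‖s‖^p`. -/
theorem sliced_wasserstein_translation
    (f : ℝ × ℝ → ℝ)
    (hfnonneg : ∀ x, 0 ≤ f x)
    (hfint : ∫ x : ℝ × ℝ, f x = 1)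
    (hfsupp : ∀ x : ℝ × ℝ, 1 < x.1 ^ 2 + x.2 ^ 2 → f x = 0)
    (s : ℝ × ℝ) (g : ℝ × ℝ → ℝ)
    (hg : ∀ x : ℝ × ℝ, g x = f (x.1 - s.1, x.2 - s.2))
    (p : ℝ) (hp : 1 ≤ p) :
    slicedWasserstein p f g
      = (Real.Gamma ((p + 1) / 2) / (Real.sqrt π * Real.Gamma (p / 2 + 1))) ^ (1 / p)
        * Real.sqrt (s.1 ^ 2 + s.2 ^ 2) ∧
    slicedWassersteinPow p f g
      = (Real.Gamma ((p + 1) / 2) / (Real.sqrt π * Real.Gamma (p / 2 + 1)))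
        * Real.sqrt (s.1 ^ 2 + s.2 ^ 2) ^ p := by
  have hp0 : (0:ℝ) < p := lt_of_lt_of_le one_pos hp
  have hfi : Integrable f := by
    by_contra h
    rw [integral_undef h] at hfint
    norm_num at hfint
  set c : ℝ → ℝ := fun θ => s.1 * Real.cos θ + s.2 * Real.sin θ with hcdef
  set R : ℝ := Real.sqrt (s.1 ^ 2 + s.2 ^ 2) with hRdef
  -- translates of projections
  have hshift : ∀ θ : ℝ, lineProj g θ = fun r => lineProj f θ (r - c θ) := by
    intro θ
    funext r
    have h := Real.sin_sq_add_cos_sq θ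
    set d : ℝ := -s.1 * Real.sin θ + s.2 * Real.cos θ with hd
    have hpt : ∀ t : ℝ, g (r * Real.cos θ - t * Real.sin θ, r * Real.sin θ + t * Real.cos θ)
        = (fun u : ℝ => f ((r - c θ) * Real.cos θ - u * Real.sin θ,
            (r - c θ) * Real.sin θ + u * Real.cos θ)) (t + -d) := by
      intro t
      rw [hg]
      refine congrArg f ?_
      rw [Prod.mk.injEq]
      exact ⟨by linear_combination s.1 * h, by linear_combination s.2 * h⟩
    unfold lineProj
    calc ∫ t : ℝ, g (r * Real.cos θ - t * Real.sin θ, r * Real.sin θ + t * Real.cos θ)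
        = ∫ t : ℝ, (fun u : ℝ => f ((r - c θ) * Real.cos θ - u * Real.sin θ,
            (r - c θ) * Real.sin θ + u * Real.cos θ)) (t + -d) := by
          exact integral_congr_ae (Filter.Eventually.of_forall hpt)
      _ = ∫ u : ℝ, f ((r - c θ) * Real.cos θ - u * Real.sin θ,
            (r - c θ) * Real.sin θ + u * Real.cos θ) :=
          integral_add_right_eq_self (μ := volume) (fun u : ℝ =>
            f ((r - c θ) * Real.cos θ - u * Real.sin θ,
              (r - c θ) * Real.sin θ + u * Real.cos θ)) (-d)
  -- cdf of projection equals 1 from 1 on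
  have hcdf1 : ∀ θ : ℝ, cdfOf (lineProj f θ) 1 = 1 := by
    intro θ
    have hμi := lineProj_integrable hfi θ
    have h0 : ∫ x in Ioi (1:ℝ), lineProj f θ x = 0 := by
      rw [setIntegral_congr_fun measurableSet_Ioi
        (g := fun _ => (0:ℝ)) (fun x hx => lineProj_zero hfsupp θ x (by nlinarith [mem_Ioi.mp hx]))]
      simp
    have hsum := intervalIntegral.integral_Iic_add_Ioi (b := (1:ℝ)) hμi.integrableOn hμi.integrableOn
    rw [h0, add_zero, lineProj_total hfi hfint θ] at hsum
    exact hsum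
  -- quantile sets are nonempty and bounded below
  have hSne : ∀ θ : ℝ, ∀ z ∈ Ioo (0:ℝ) 1, {t : ℝ | z ≤ cdfOf (lineProj f θ) t}.Nonempty := by
    intro θ z hz
    exact ⟨1, by simp only [mem_setOf_eq, hcdf1 θ]; exact hz.2.le⟩
  have hSbdd : ∀ θ : ℝ, ∀ z ∈ Ioo (0:ℝ) 1, BddBelow {t : ℝ | z ≤ cdfOf (lineProj f θ) t} := by
    intro θ z hz
    refine ⟨-1, fun t ht => ?_⟩
    by_contra hlt
    push_neg at hlt
    have hcdf0 : cdfOf (lineProj f θ) t = 0 := by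
      unfold cdfOf
      rw [setIntegral_congr_fun measurableSet_Iic (g := fun _ => (0:ℝ))
        (fun x hx => lineProj_zero hfsupp θ x (by nlinarith [mem_Iic.mp hx]))]
      simp
    rw [mem_setOf_eq, hcdf0] at ht
    linarith [hz.1]
  -- quantiles shift
  have hquant : ∀ θ : ℝ, ∀ z ∈ Ioo (0:ℝ) 1,
      quantileOf (lineProj g θ) z = quantileOf (lineProj f θ) z + c θ := by
    intro θ z hz
    rw [hshift θ]
    exact quantile_shift (lineProj f θ) (c θ) z (hSne θ z hz) (hSbdd θ z hz)
  -- the 1-D Wasserstein cost at each angle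
  have hW : ∀ θ : ℝ, wassersteinPow p (lineProj f θ) (lineProj g θ) = |c θ| ^ p := by
    intro θ
    unfold wassersteinPow
    rw [setIntegral_congr_fun measurableSet_Ioo (g := fun _ : ℝ => |c θ| ^ p)
      (fun z hz => by
        rw [hquant θ z hz, show quantileOf (lineProj f θ) z -
          (quantileOf (lineProj f θ) z + c θ) = -(c θ) by ring, abs_neg])]
    rw [setIntegral_const]
    simp [Real.volume_Ioo]
  -- the angular integral
  have hang : ∫ θ in Ioo (0:ℝ) (2*π), |c θ| ^ p
      = R ^ p * (2 * Real.sqrt π * Real.Gamma ((p+1)/2) / Real.Gamma (p/2+1)) := by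
    have hper : Function.Periodic (fun θ : ℝ => |Real.cos θ| ^ p) (2*π) := fun x => by
      simp [Real.cos_add_two_pi]
    by_cases hR0 : R = 0
    · have hs0 : s.1 ^ 2 + s.2 ^ 2 = 0 := by
        have h1 := Real.sqrt_eq_zero'.mp hR0
        nlinarith [sq_nonneg s.1, sq_nonneg s.2]
      have hs1 : s.1 = 0 := by nlinarith [sq_nonneg s.1, sq_nonneg s.2]
      have hs2 : s.2 = 0 := by nlinarith [sq_nonneg s.1, sq_nonneg s.2]
      have hc0 : ∀ θ : ℝ, c θ = 0 := by intro θ; simp [hcdef, hs1, hs2]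
      simp [hc0, Real.zero_rpow hp0.ne', hR0]
    · have hRpos : 0 < R := lt_of_le_of_ne (Real.sqrt_nonneg _) (Ne.symm hR0)
      set w : ℂ := ⟨s.1, s.2⟩ with hw
      have habs : ‖w‖ = R := by
        rw [Complex.norm_def, Complex.normSq_mk, hRdef]
        norm_num [pow_two]
      have hwne : w ≠ 0 := by
        intro h0
        rw [h0] at habs
        simp only [norm_zero] at habs
        exact hR0 habs.symm
      set φ := Complex.arg w with hφ
      have hcosφ : Real.cos φ = s.1 / R := by rw [hφ, Complex.cos_arg hwne, habs]
      have hsinφ : Real.sin φ = s.2 / R := by rw [hφ, Complex.sin_arg, habs]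
      have hcθ : ∀ θ : ℝ, c θ = R * Real.cos (θ - φ) := by
        intro θ
        rw [Real.cos_sub, hcosφ, hsinφ, hcdef]
        field_simp
      have habsp : ∀ θ : ℝ, |c θ| ^ p = R ^ p * |Real.cos (θ - φ)| ^ p := by
        intro θ
        rw [hcθ, abs_mul, abs_of_pos hRpos, Real.mul_rpow hRpos.le (abs_nonneg _)]
      rw [setIntegral_congr_fun measurableSet_Ioo
        (g := fun θ : ℝ => R ^ p * |Real.cos (θ - φ)| ^ p) (fun θ _ => habsp θ),
        integral_const_mul]
      congr 1
      calc ∫ θ in Ioo (0:ℝ) (2*π), |Real.cos (θ - φ)| ^ p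
          = ∫ θ in (0:ℝ)..(2*π), |Real.cos (θ - φ)| ^ p := by
            rw [intervalIntegral.integral_of_le (by positivity),
              integral_Ioc_eq_integral_Ioo]
        _ = ∫ θ in (0 - φ)..(2*π - φ), |Real.cos θ| ^ p :=
            intervalIntegral.integral_comp_sub_right (fun θ : ℝ => |Real.cos θ| ^ p) φ
        _ = ∫ θ in (-φ)..(-φ + 2*π), |Real.cos θ| ^ p := by
            rw [zero_sub]; congr 1; ring
        _ = ∫ θ in (-π)..(-π + 2*π), |Real.cos θ| ^ p := hper.intervalIntegral_add_eq (-φ) (-π)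
        _ = ∫ θ in (-π)..π, |Real.cos θ| ^ p := by congr 1; ring
        _ = ∫ θ in Ioo (-π) π, |Real.cos θ| ^ p := by
            rw [intervalIntegral.integral_of_le (by linarith [Real.pi_pos]),
              integral_Ioc_eq_integral_Ioo]
        _ = 2 * Real.sqrt π * Real.Gamma ((p+1)/2) / Real.Gamma (p/2+1) :=
            integral_abs_cos_rpow p hp0
  -- conclude
  have hΓpos : 0 < Real.Gamma (p/2+1) := Real.Gamma_pos_of_pos (by linarith)
  have hΓ1pos : 0 < Real.Gamma ((p+1)/2) := Real.Gamma_pos_of_pos (by linarith)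
  have hsqpos : 0 < Real.sqrt π := Real.sqrt_pos.mpr Real.pi_pos
  have hπ : Real.sqrt π * Real.sqrt π = π := Real.mul_self_sqrt Real.pi_pos.le
  have hpow : slicedWassersteinPow p f g
      = Real.Gamma ((p + 1) / 2) / (Real.sqrt π * Real.Gamma (p / 2 + 1)) * R ^ p := by
    unfold slicedWassersteinPow
    rw [setIntegral_congr_fun measurableSet_Ioo
      (g := fun θ : ℝ => |c θ| ^ p) (fun θ _ => hW θ), hang]
    have h1 : (1:ℝ)/(2*π) * (2*Real.sqrt π) = 1/Real.sqrt π := by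
      rw [show (2*π) = 2*(Real.sqrt π * Real.sqrt π) by rw [hπ]]
      field_simp
    rw [show (1:ℝ)/(2*π) * (R ^ p * (2 * Real.sqrt π * Real.Gamma ((p+1)/2) / Real.Gamma (p/2+1)))
        = ((1/(2*π)) * (2*Real.sqrt π)) * (R ^ p * Real.Gamma ((p+1)/2) / Real.Gamma (p/2+1))
      from by ring, h1]
    ring
  refine ⟨?_, hpow⟩
  unfold slicedWasserstein
  rw [hpow]
  have hC : (0:ℝ) ≤ Real.Gamma ((p + 1) / 2) / (Real.sqrt π * Real.Gamma (p / 2 + 1)) := by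
    positivity
  rw [Real.mul_rpow hC (Real.rpow_nonneg (Real.sqrt_nonneg _) p),
    ← Real.rpow_mul (Real.sqrt_nonneg _), mul_one_div_cancel hp0.ne', Real.rpow_one]
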